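/- Define polynomials P_k by P_0(z)=1, P_1(z)=z - an, and P_{k+1}(z) = z P_k(z) + a²(n²-k²)/((2k-1)(2k+1)) · P_{k-1}(z) for 1 ≤ k ≤ n-1, with a ∈ ℂ \ {0} and n a positive integer. Then P_n(z) = (z-a)^n. -/

import Mathlib

open Polynomial Finset

noncomputable def co (n k d : ℕ) : ℂ :=
  (-2 : ℂ) ^ k / (-2 : ℂ) ^ d * (∏ j ∈ Finset.Ico d k, ((n : ℂ) - 1 - (j : ℂ))) *
      (∏ i ∈ Finset.range d, ((k : ℂ) - (i : ℂ))) /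
    (∏ i ∈ Finset.range d, ((i : ℂ) + 1)) /
    (∏ i ∈ Finset.Ico (k + d) (2 * k), ((i : ℂ) + 1))

lemma fact_cast_ne (x : ℕ) : ((Nat.factorial x : ℕ) : ℂ) ≠ 0 :=
  Nat.cast_ne_zero.mpr (Nat.factorial_ne_zero x)

lemma fact_succ_cast (x : ℕ) :
    ((Nat.factorial (x + 1) : ℕ) : ℂ) = ((x + 1 : ℕ) : ℂ) * ((Nat.factorial x : ℕ) : ℂ) := by
  rw [Nat.factorial_succ]; push_cast; ring

lemma prod_range_g (d : ℕ) :
    (∏ i ∈ Finset.range d, ((i : ℂ) + 1)) = ((Nat.factorial d : ℕ) : ℂ) := by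
  rw [← Finset.prod_range_add_one_eq_factorial d]; push_cast; rfl

lemma prod_Ico_g {a b : ℕ} (h : a ≤ b) :
    (∏ i ∈ Finset.Ico a b, ((i : ℂ) + 1)) =
      ((Nat.factorial b : ℕ) : ℂ) / ((Nat.factorial a : ℕ) : ℂ) := by
  induction b, h using Nat.le_induction with
  | base => rw [Finset.Ico_self, Finset.prod_empty, div_self (fact_cast_ne a)]
  | succ b hb ih =>
      rw [Finset.prod_Ico_succ_top (by omega), ih, fact_succ_cast]
      push_cast
      field_simp

lemma prod_desc (K : ℕ) : ∀ d, d ≤ K →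
    (∏ i ∈ Finset.range d, ((K : ℂ) - (i : ℂ))) =
      ((Nat.factorial K : ℕ) : ℂ) / ((Nat.factorial (K - d) : ℕ) : ℂ) := by
  intro d
  induction d with
  | zero => intro _; rw [Finset.range_zero, Finset.prod_empty, Nat.sub_zero,
      div_self (fact_cast_ne K)]
  | succ d ih =>
      intro h
      rw [Finset.prod_range_succ, ih (by omega)]
      have h1 : K - d = (K - (d + 1)) + 1 := by omega
      have h2 : ((K : ℂ) - (d : ℂ)) = ((K - (d + 1) + 1 : ℕ) : ℂ) := by
        have h4 : (K - (d + 1)) + (d + 1) = K := by omega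
        have h5 := congrArg (fun t : ℕ => (t : ℂ)) h4
        push_cast at h5 ⊢
        linear_combination -h5
      have hne2 : ((K - (d + 1) + 1 : ℕ) : ℂ) ≠ 0 := by
        push_cast; exact Nat.cast_add_one_ne_zero _
      rw [h1, fact_succ_cast, h2, div_mul_eq_mul_div,
        mul_comm (((Nat.factorial K : ℕ) : ℂ)) _, mul_div_mul_left _ _ hne2]

lemma co_self (n k : ℕ) : co n k k = 1 := by
  have h2 : ((-2 : ℂ)) ^ k ≠ 0 := pow_ne_zero _ (by norm_num)
  simp only [co, two_mul, Finset.Ico_self, Finset.prod_empty]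
  rw [prod_desc k k le_rfl, Nat.sub_self, prod_range_g]
  simp only [Nat.factorial_zero, Nat.cast_one, div_one, mul_one]
  rw [div_self h2, one_mul, div_self (fact_cast_ne k)]

lemma co_zero (n k d : ℕ) (h : k < d) : co n k d = 0 := by
  simp only [co]
  rw [Finset.prod_eq_zero (Finset.mem_range.mpr h) (sub_self ((k : ℕ) : ℂ))]
  simp

lemma co_top (n d : ℕ) (hn : 0 < n) (hd : d < n) : co n n d = 0 := by
  simp only [co]
  rw [Finset.prod_eq_zero (i := n - 1)
    (by simp only [Finset.mem_Ico]; omega)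
    (by
      have h4 : (n - 1) + 1 = n := by omega
      have h5 := congrArg (fun t : ℕ => (t : ℂ)) h4
      push_cast at h5
      linear_combination -h5)]
  simp

lemma cast_ne_of_pos {x : ℕ} (h : 0 < x) : ((x : ℕ) : ℂ) ≠ 0 :=
  Nat.cast_ne_zero.mpr (by omega)

lemma co_rec0 (n m : ℕ) :
    co n (m + 2) 0 = co n (m + 1) 0 +
      ((n : ℂ) ^ 2 - ((m : ℂ) + 1) ^ 2) / ((2 * (m : ℂ) + 1) * (2 * (m : ℂ) + 3)) *
        co n m 0 := by
  simp only [co, Finset.range_zero, Finset.prod_empty, Nat.add_zero, pow_zero]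
  -- split the numerator products
  have hf2 : (∏ j ∈ Finset.Ico 0 (m + 1), ((n : ℂ) - 1 - (j : ℂ)))
      = (∏ j ∈ Finset.Ico 0 m, ((n : ℂ) - 1 - (j : ℂ))) * ((n : ℂ) - 1 - (m : ℂ)) :=
    Finset.prod_Ico_succ_top (by omega) _
  have hf1 : (∏ j ∈ Finset.Ico 0 (m + 2), ((n : ℂ) - 1 - (j : ℂ)))
      = (∏ j ∈ Finset.Ico 0 m, ((n : ℂ) - 1 - (j : ℂ))) * ((n : ℂ) - 1 - (m : ℂ)) *
          ((n : ℂ) - 1 - ((m + 1 : ℕ) : ℂ)) := by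
    rw [(by omega : m + 2 = (m + 1) + 1), Finset.prod_Ico_succ_top (by omega), hf2]
  rw [hf1, hf2]
  rw [prod_Ico_g (show m + 2 ≤ 2 * (m + 2) by omega),
      prod_Ico_g (show m + 1 ≤ 2 * (m + 1) by omega),
      prod_Ico_g (show m ≤ 2 * m by omega)]
  rw [(by omega : 2 * (m + 2) = 2 * m + 3 + 1), fact_succ_cast (2 * m + 3),
      (by omega : 2 * m + 3 = 2 * m + 2 + 1), fact_succ_cast (2 * m + 2),
      (by omega : 2 * (m + 1) = 2 * m + 2)]
  rw [(by omega : 2 * m + 2 = 2 * m + 1 + 1), fact_succ_cast (2 * m + 1),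
      fact_succ_cast (2 * m)]
  rw [(by omega : m + 2 = m + 1 + 1), fact_succ_cast (m + 1), fact_succ_cast m]
  have e1 : ((2 * m + 1 : ℕ) : ℂ) ≠ 0 := cast_ne_of_pos (by omega)
  have e2 : ((2 * m + 1 + 1 : ℕ) : ℂ) ≠ 0 := cast_ne_of_pos (by omega)
  have e3 : ((2 * m + 1 + 1 + 1 : ℕ) : ℂ) ≠ 0 := cast_ne_of_pos (by omega)
  have e4 : ((2 * m + 1 + 1 + 1 + 1 : ℕ) : ℂ) ≠ 0 := cast_ne_of_pos (by omega)
  have e5 : ((m + 1 : ℕ) : ℂ) ≠ 0 := cast_ne_of_pos (by omega)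
  have e6 : ((m + 1 + 1 : ℕ) : ℂ) ≠ 0 := cast_ne_of_pos (by omega)
  have e7 : ((Nat.factorial m : ℕ) : ℂ) ≠ 0 := fact_cast_ne m
  have e8 : ((Nat.factorial (2 * m) : ℕ) : ℂ) ≠ 0 := fact_cast_ne _
  have e9 : ((-2 : ℂ)) ≠ 0 := by norm_num
  have e10 : (2 * (m : ℂ) + 1) ≠ 0 := by
    have := cast_ne_of_pos (show 0 < 2 * m + 1 by omega); push_cast at this; exact this
  have e11 : (2 * (m : ℂ) + 3) ≠ 0 := by
    have := cast_ne_of_pos (show 0 < 2 * m + 3 by omega); push_cast at this; exact this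
  push_cast at e1 e2 e3 e4 e5 e6 ⊢
  field_simp [e1, e2, e3, e4, e5, e6, e7, e8, e9, e10, e11]
  ring

set_option maxHeartbeats 3200000 in
lemma co_rec (n m d : ℕ) :
    co n (m + 2) (d + 1) = co n (m + 1) d + co n (m + 1) (d + 1) +
      ((n : ℂ) ^ 2 - ((m : ℂ) + 1) ^ 2) / ((2 * (m : ℂ) + 1) * (2 * (m : ℂ) + 3)) *
        co n m (d + 1) := by
  rcases Nat.lt_trichotomy d m with hd | rfl | hd
  · -- generic case d < m
    obtain ⟨v, rfl⟩ : ∃ v, m = d + 1 + v := ⟨m - (d + 1), by omega⟩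
    simp only [co]
    rw [(by omega : d + 1 + v = d + v + 1)]
    rw [(by omega : d + v + 1 + 2 = d + v + 3), (by omega : d + v + 1 + 1 = d + v + 2)]
    -- split the (n-1-j) products
    have hf3 : (∏ j ∈ Finset.Ico (d + 1) (d + v + 2), ((n : ℂ) - 1 - (j : ℂ)))
        = (∏ j ∈ Finset.Ico (d + 1) (d + v + 1), ((n : ℂ) - 1 - (j : ℂ))) *
            ((n : ℂ) - 1 - ((d + v + 1 : ℕ) : ℂ)) := by
      rw [(by omega : d + v + 2 = (d + v + 1) + 1)]
      exact Finset.prod_Ico_succ_top (by omega) _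
    have hf1 : (∏ j ∈ Finset.Ico (d + 1) (d + v + 3), ((n : ℂ) - 1 - (j : ℂ)))
        = (∏ j ∈ Finset.Ico (d + 1) (d + v + 1), ((n : ℂ) - 1 - (j : ℂ))) *
            ((n : ℂ) - 1 - ((d + v + 1 : ℕ) : ℂ)) * ((n : ℂ) - 1 - ((d + v + 2 : ℕ) : ℂ)) := by
      rw [(by omega : d + v + 3 = (d + v + 2) + 1), Finset.prod_Ico_succ_top (by omega), hf3]
    have hf2 : (∏ j ∈ Finset.Ico d (d + v + 2), ((n : ℂ) - 1 - (j : ℂ)))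
        = ((n : ℂ) - 1 - (d : ℂ)) *
            ((∏ j ∈ Finset.Ico (d + 1) (d + v + 1), ((n : ℂ) - 1 - (j : ℂ))) *
              ((n : ℂ) - 1 - ((d + v + 1 : ℕ) : ℂ))) := by
      rw [Finset.prod_eq_prod_Ico_succ_bot (by omega), hf3]
    rw [hf1, hf2, hf3]
    -- descending products
    rw [prod_desc (d + v + 3) (d + 1) (by omega), prod_desc (d + v + 2) d (by omega),
        prod_desc (d + v + 2) (d + 1) (by omega), prod_desc (d + v + 1) (d + 1) (by omega)]
    rw [(by omega : d + v + 3 - (d + 1) = v + 2), (by omega : d + v + 2 - d = v + 2),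
        (by omega : d + v + 2 - (d + 1) = v + 1), (by omega : d + v + 1 - (d + 1) = v)]
    -- range products of (i+1)
    rw [prod_range_g d, prod_range_g (d + 1)]
    -- Ico products of (i+1)
    rw [(by omega : d + v + 3 + (d + 1) = 2 * d + v + 4),
        (by omega : 2 * (d + v + 3) = 2 * d + 2 * v + 6),
        (by omega : d + v + 2 + d = 2 * d + v + 2),
        (by omega : 2 * (d + v + 2) = 2 * d + 2 * v + 4),
        (by omega : d + v + 2 + (d + 1) = 2 * d + v + 3),
        (by omega : d + v + 1 + (d + 1) = 2 * d + v + 2),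
        (by omega : 2 * (d + v + 1) = 2 * d + 2 * v + 2)]
    rw [prod_Ico_g (show 2 * d + v + 4 ≤ 2 * d + 2 * v + 6 by omega),
        prod_Ico_g (show 2 * d + v + 2 ≤ 2 * d + 2 * v + 4 by omega),
        prod_Ico_g (show 2 * d + v + 3 ≤ 2 * d + 2 * v + 4 by omega),
        prod_Ico_g (show 2 * d + v + 2 ≤ 2 * d + 2 * v + 2 by omega)]
    -- factorial ladders
    rw [(by omega : 2 * d + 2 * v + 6 = 2 * d + 2 * v + 5 + 1), fact_succ_cast (2 * d + 2 * v + 5),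
        (by omega : 2 * d + 2 * v + 5 = 2 * d + 2 * v + 4 + 1), fact_succ_cast (2 * d + 2 * v + 4),
        (by omega : 2 * d + 2 * v + 4 = 2 * d + 2 * v + 3 + 1), fact_succ_cast (2 * d + 2 * v + 3),
        (by omega : 2 * d + 2 * v + 3 = 2 * d + 2 * v + 2 + 1), fact_succ_cast (2 * d + 2 * v + 2)]
    rw [(by omega : 2 * d + v + 4 = 2 * d + v + 3 + 1), fact_succ_cast (2 * d + v + 3),
        (by omega : 2 * d + v + 3 = 2 * d + v + 2 + 1), fact_succ_cast (2 * d + v + 2)]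
    rw [(by omega : d + v + 3 = d + v + 2 + 1), fact_succ_cast (d + v + 2),
        (by omega : d + v + 2 = d + v + 1 + 1), fact_succ_cast (d + v + 1)]
    rw [(by omega : v + 2 = v + 1 + 1), fact_succ_cast (v + 1), fact_succ_cast v,
        fact_succ_cast d]
    have e1 : ((v + 1 : ℕ) : ℂ) ≠ 0 := cast_ne_of_pos (by omega)
    have e2 : ((v + 1 + 1 : ℕ) : ℂ) ≠ 0 := cast_ne_of_pos (by omega)
    have e3 : ((d + 1 : ℕ) : ℂ) ≠ 0 := cast_ne_of_pos (by omega)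
    have e4 : ((d + v + 1 + 1 : ℕ) : ℂ) ≠ 0 := cast_ne_of_pos (by omega)
    have e5 : ((d + v + 1 + 1 + 1 : ℕ) : ℂ) ≠ 0 := cast_ne_of_pos (by omega)
    have e6 : ((2 * d + v + 2 + 1 : ℕ) : ℂ) ≠ 0 := cast_ne_of_pos (by omega)
    have e7 : ((2 * d + v + 2 + 1 + 1 : ℕ) : ℂ) ≠ 0 := cast_ne_of_pos (by omega)
    have e8 : ((2 * d + 2 * v + 2 + 1 : ℕ) : ℂ) ≠ 0 := cast_ne_of_pos (by omega)
    have e9 : ((2 * d + 2 * v + 2 + 1 + 1 : ℕ) : ℂ) ≠ 0 := cast_ne_of_pos (by omega)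
    have e10 : ((2 * d + 2 * v + 2 + 1 + 1 + 1 : ℕ) : ℂ) ≠ 0 := cast_ne_of_pos (by omega)
    have e11 : ((2 * d + 2 * v + 2 + 1 + 1 + 1 + 1 : ℕ) : ℂ) ≠ 0 := cast_ne_of_pos (by omega)
    have e12 : ((Nat.factorial v : ℕ) : ℂ) ≠ 0 := fact_cast_ne v
    have e13 : ((Nat.factorial d : ℕ) : ℂ) ≠ 0 := fact_cast_ne d
    have e14 : ((Nat.factorial (d + v + 1) : ℕ) : ℂ) ≠ 0 := fact_cast_ne _
    have e15 : ((Nat.factorial (2 * d + v + 2) : ℕ) : ℂ) ≠ 0 := fact_cast_ne _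
    have e16 : ((Nat.factorial (2 * d + 2 * v + 2) : ℕ) : ℂ) ≠ 0 := fact_cast_ne _
    have e17 : ((-2 : ℂ)) ≠ 0 := by norm_num
    have e18 : (2 * ((d : ℂ) + (v : ℂ) + 1) + 1) ≠ 0 := by
      have := cast_ne_of_pos (show 0 < 2 * (d + v + 1) + 1 by omega); push_cast at this
      exact this
    have e19 : (2 * ((d : ℂ) + (v : ℂ) + 1) + 3) ≠ 0 := by
      have := cast_ne_of_pos (show 0 < 2 * (d + v + 1) + 3 by omega); push_cast at this
      exact this
    have e20 : ((-2 : ℂ)) ^ d ≠ 0 := pow_ne_zero _ e17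
    have e21 : ((-2 : ℂ)) ^ v ≠ 0 := pow_ne_zero _ e17
    have e14b : ((Nat.factorial (1 + d + v) : ℕ) : ℂ) ≠ 0 := fact_cast_ne _
    have e15b : ((Nat.factorial (2 + d * 2 + v) : ℕ) : ℂ) ≠ 0 := fact_cast_ne _
    have e16b : ((Nat.factorial (2 + d * 2 + v * 2) : ℕ) : ℂ) ≠ 0 := fact_cast_ne _
    push_cast at e1 e2 e3 e4 e5 e6 e7 e8 e9 e10 e11 e12 e13 e14 e15 e16 ⊢
    have e22 : (2 : ℂ) ≠ 0 := two_ne_zero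
    have e23 : (4 : ℂ) ≠ 0 := by norm_num
    have e24 : (8 : ℂ) ≠ 0 := by norm_num
    field_simp [e1, e2, e3, e4, e5, e6, e7, e8, e9, e10, e11, e12, e13, e14, e15, e16,
      e17, e18, e19, e20, e21, e14b, e15b, e16b]
    have e25 : (2 * ((d : ℂ) + (v : ℂ) + 1) + 1 + 1) ≠ 0 := by
      exact_mod_cast cast_ne_of_pos (show 0 < 2 * (d + v + 1) + 1 + 1 by omega)
    have e26 : (2 * ((d : ℂ) + (v : ℂ) + 1) + 1 + 1 + 1) ≠ 0 := by
      exact_mod_cast cast_ne_of_pos (show 0 < 2 * (d + v + 1) + 1 + 1 + 1 by omega)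
    have e27 : (2 * ((d : ℂ) + (v : ℂ) + 1) + 1 + 1 + 1 + 1) ≠ 0 := by
      exact_mod_cast cast_ne_of_pos (show 0 < 2 * (d + v + 1) + 1 + 1 + 1 + 1 by omega)
    field_simp
    ring
  · -- case d = m
    rw [co_zero n d (d + 1) (by omega), mul_zero, add_zero, co_self]
    simp only [co]
    rw [(by omega : d + 2 = d + 1 + 1)]
    rw [Nat.Ico_succ_singleton, Finset.prod_singleton, Nat.Ico_succ_singleton,
      Finset.prod_singleton]
    rw [prod_desc (d + 1 + 1) (d + 1) (by omega), prod_desc (d + 1) d (by omega)]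
    rw [(by omega : d + 1 + 1 - (d + 1) = 1), (by omega : d + 1 - d = 1),
      Nat.factorial_one, Nat.cast_one, div_one, div_one]
    rw [prod_range_g d, prod_range_g (d + 1)]
    rw [(by omega : d + 1 + 1 + (d + 1) = 2 * d + 3), (by omega : 2 * (d + 1 + 1) = 2 * d + 4),
        (by omega : d + 1 + d = 2 * d + 1), (by omega : 2 * (d + 1) = 2 * d + 2)]
    rw [prod_Ico_g (show 2 * d + 3 ≤ 2 * d + 4 by omega),
        prod_Ico_g (show 2 * d + 1 ≤ 2 * d + 2 by omega)]
    rw [(by omega : 2 * d + 4 = 2 * d + 3 + 1), fact_succ_cast (2 * d + 3),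
        (by omega : 2 * d + 2 = 2 * d + 1 + 1), fact_succ_cast (2 * d + 1)]
    rw [fact_succ_cast (d + 1), fact_succ_cast d]
    have e1 : ((d + 1 : ℕ) : ℂ) ≠ 0 := cast_ne_of_pos (by omega)
    have e2 : ((d + 1 + 1 : ℕ) : ℂ) ≠ 0 := cast_ne_of_pos (by omega)
    have e3 : ((2 * d + 1 + 1 : ℕ) : ℂ) ≠ 0 := cast_ne_of_pos (by omega)
    have e4 : ((2 * d + 3 + 1 : ℕ) : ℂ) ≠ 0 := cast_ne_of_pos (by omega)
    have e5 : ((2 * d + 1 : ℕ) : ℂ) ≠ 0 := cast_ne_of_pos (by omega)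
    have e6 : ((2 * d + 3 : ℕ) : ℂ) ≠ 0 := cast_ne_of_pos (by omega)
    have e7 : ((Nat.factorial d : ℕ) : ℂ) ≠ 0 := fact_cast_ne d
    have e8 : ((Nat.factorial (2 * d + 1) : ℕ) : ℂ) ≠ 0 := fact_cast_ne _
    have e9 : ((Nat.factorial (2 * d + 3) : ℕ) : ℂ) ≠ 0 := fact_cast_ne _
    have e10 : ((-2 : ℂ)) ≠ 0 := by norm_num
    push_cast at e1 e2 e3 e4 e5 e6 ⊢
    field_simp [e1, e2, e3, e4, e5, e6, e7, e8, e9, e10]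
    ring
  · rcases (by omega : d = m + 1 ∨ m + 1 < d) with rfl | hd2
    · rw [(by omega : m + 1 + 1 = m + 2), co_self, co_self,
        co_zero n (m + 1) (m + 2) (by omega), co_zero n m (m + 2) (by omega)]
      ring
    · rw [co_zero n (m + 2) (d + 1) (by omega), co_zero n (m + 1) d (by omega),
        co_zero n (m + 1) (d + 1) (by omega), co_zero n m (d + 1) (by omega)]
      ring

lemma co_10 (n : ℕ) : co n 1 0 = 1 - (n : ℂ) := by
  simp only [co, Finset.range_zero, Finset.prod_empty, Nat.add_zero, pow_zero, pow_one]
  rw [(by norm_num : (2 : ℕ) * 1 = 1 + 1), Nat.Ico_succ_singleton, Finset.prod_singleton,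
    (by norm_num : (1 : ℕ) = 0 + 1)]
  rw [Nat.Ico_succ_singleton, Finset.prod_singleton]
  push_cast
  field_simp
  ring

noncomputable def Qx (n : ℕ) (a : ℂ) (k : ℕ) : Polynomial ℂ :=
  ∑ d ∈ Finset.range (k + 1),
    Polynomial.C (co n k d * a ^ k / a ^ d) * Polynomial.X ^ d

lemma Qx_coeff (n : ℕ) (a : ℂ) (k t : ℕ) :
    (Qx n a k).coeff t = if t ≤ k then co n k t * a ^ k / a ^ t else 0 := by
  rw [Qx, Polynomial.finset_sum_coeff]
  simp only [Polynomial.coeff_C_mul, Polynomial.coeff_X_pow, mul_ite, mul_one, mul_zero]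
  rw [Finset.sum_ite_eq]
  simp [Nat.lt_succ_iff]

lemma Qx_rec (n m : ℕ) (a : ℂ) (ha : a ≠ 0) :
    Qx n a (m + 2) = (X + C a) * Qx n a (m + 1) +
      C (a ^ 2 * ((n : ℂ) ^ 2 - ((m : ℂ) + 1) ^ 2) /
        ((2 * (m : ℂ) + 1) * (2 * (m : ℂ) + 3))) * Qx n a m := by
  have h2m1 : (2 * (m : ℂ) + 1) ≠ 0 := by
    have := cast_ne_of_pos (show 0 < 2 * m + 1 by omega); push_cast at this; exact this
  have h2m3 : (2 * (m : ℂ) + 3) ≠ 0 := by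
    have := cast_ne_of_pos (show 0 < 2 * m + 3 by omega); push_cast at this; exact this
  ext t
  rw [Polynomial.coeff_add, Polynomial.coeff_C_mul, add_mul, Polynomial.coeff_add,
    Polynomial.coeff_C_mul, Qx_coeff, Qx_coeff, Qx_coeff]
  cases t with
  | zero =>
      rw [Polynomial.coeff_X_mul_zero]
      simp only [Nat.zero_le, if_true, zero_add, pow_zero, div_one]
      rw [co_rec0 n m]
      field_simp
      ring
  | succ t =>
      rw [Polynomial.coeff_X_mul, Qx_coeff]
      split_ifs with h1 h2 h3 h4 <;> try omega
      · -- t + 1 ≤ m + 2, t ≤ m + 1, t + 1 ≤ m + 1, t + 1 ≤ m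
        rw [co_rec n m t]
        field_simp
        ring
      · -- t = m
        rw [co_rec n m t, co_zero n m (t + 1) (by omega)]
        field_simp
        ring
      · -- t = m + 1
        rw [co_rec n m t, co_zero n m (t + 1) (by omega),
          co_zero n (m + 1) (t + 1) (by omega)]
        field_simp
        ring
      · -- t ≥ m + 2
        ring

theorem schwarz_char_poly (n : ℕ) (hn : 0 < n) (a : ℂ) (ha : a ≠ 0)
    (P : ℕ → Polynomial ℂ)
    (hP0 : P 0 = 1)
    (hP1 : P 1 = Polynomial.X - Polynomial.C (a * n))
    (hPrec : ∀ k : ℕ, 1 ≤ k → k ≤ n - 1 →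
      P (k + 1) = Polynomial.X * P k +
        Polynomial.C (a ^ 2 * ((n : ℂ) ^ 2 - (k : ℂ) ^ 2) /
          ((2 * (k : ℂ) - 1) * (2 * (k : ℂ) + 1))) * P (k - 1)) :
    P n = (Polynomial.X - Polynomial.C a) ^ n := by
  have key : ∀ k, k ≤ n → P k = (Qx n a k).comp (X - C a) := by
    intro k
    induction k using Nat.strong_induction_on with
    | _ k ih =>
      intro hk
      match k with
      | 0 =>
          rw [hP0]
          have h0 : Qx n a 0 = 1 := by
            rw [Qx]
            simp [co_self]
          rw [h0, Polynomial.one_comp]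
      | 1 =>
          rw [hP1]
          have h1 : Qx n a 1 = X + C ((1 - (n : ℂ)) * a) := by
            rw [Qx]
            rw [Finset.sum_range_succ, Finset.sum_range_one]
            rw [co_self, co_10]
            rw [pow_one, pow_zero, div_one, one_mul, div_self ha]
            simp
            ring
          rw [h1, Polynomial.add_comp, Polynomial.X_comp, Polynomial.C_comp]
          simp only [map_mul, map_sub, map_one]
          ring
      | (m + 2) =>
          have hre := hPrec (m + 1) (by omega) (by omega)
          simp only [Nat.add_sub_cancel] at hre
          rw [hre, ih (m + 1) (by omega) (by omega), ih m (by omega) (by omega)]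
          have hq := congrArg (fun p : Polynomial ℂ => p.comp (X - C a)) (Qx_rec n m a ha)
          simp only [Polynomial.add_comp, Polynomial.mul_comp, Polynomial.X_comp,
            Polynomial.C_comp] at hq
          have hx : (X : Polynomial ℂ) - C a + C a = X := by ring
          rw [hx] at hq
          have hcast : a ^ 2 * ((n : ℂ) ^ 2 - ((m + 1 : ℕ) : ℂ) ^ 2) /
              ((2 * ((m + 1 : ℕ) : ℂ) - 1) * (2 * ((m + 1 : ℕ) : ℂ) + 1))
              = a ^ 2 * ((n : ℂ) ^ 2 - ((m : ℂ) + 1) ^ 2) /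
              ((2 * (m : ℂ) + 1) * (2 * (m : ℂ) + 3)) := by
            push_cast
            ring_nf
          rw [hcast, ← hq]
  have hQn : Qx n a n = X ^ n := by
    rw [Qx, Finset.sum_range_succ, co_self, one_mul, div_self (pow_ne_zero n ha)]
    rw [Finset.sum_eq_zero (fun d hd => by
      rw [co_top n d hn (Finset.mem_range.mp hd)]; simp)]
    simp
  rw [key n le_rfl, hQn, Polynomial.pow_comp, Polynomial.X_comp]
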